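/- Let n > 1 and let φ : (0,∞) → (0,1) be C¹ and strictly decreasing with lim_{ξ→0+} φ(ξ) = 1, lim_{ξ→∞} φ(ξ) = 0, 1 − φ(ξ) ≤ C ξ^{2(n+1)/(n−1)} on (0,1], and ξ² φ(ξ) → 0 as ξ → ∞. Then for every x > 0 the local accumulation time of the self-similar solution u(x,t) = v_∞(x) φ(x/√t) satisfies τ^∞(x) := ∫_0^∞ t · (∂/∂t) [ φ(x/√t) ] dt = a x², where a = 2 ∫_0^∞ ξ^{−3} ( 1 − φ(ξ) ) dξ is finite. -/

import Mathlib

open Real Filter MeasureTheory Set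

/-- Derivative of a strictly decreasing function on `Ioi 0` is nonpositive. -/
lemma aux_deriv_nonpos (φ : ℝ → ℝ) (hmono : StrictAntiOn φ (Set.Ioi 0))
    (hd : ∀ η ∈ Set.Ioi (0:ℝ), HasDerivAt φ (deriv φ η) η) :
    ∀ η ∈ Set.Ioi (0:ℝ), deriv φ η ≤ 0 := by
  intro η hη
  have hslope : Tendsto (slope φ η) (nhdsWithin η {η}ᶜ) (nhds (deriv φ η)) :=
    hasDerivAt_iff_tendsto_slope.mp (hd η hη)
  have hslope' : Tendsto (slope φ η) (nhdsWithin η (Set.Ioi η)) (nhds (deriv φ η)) :=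
    hslope.mono_left (nhdsWithin_mono η (fun y hy => ne_of_gt hy))
  refine le_of_tendsto hslope' ?_
  filter_upwards [self_mem_nhdsWithin] with y hy
  have hy' : y ∈ Set.Ioi (0:ℝ) := mem_Ioi.mpr (lt_trans (mem_Ioi.mp hη) (mem_Ioi.mp hy))
  have : φ y < φ η := hmono hη hy' hy
  rw [slope_def_field]
  exact div_nonpos_of_nonpos_of_nonneg (by linarith) (by linarith [mem_Ioi.mp hy])

/-- The local accumulation time of the self-similar solution:
`τ^∞(x) = ∫_0^∞ t ∂_t[φ(x/√t)] dt = a x²` with `a = 2 ∫_0^∞ ξ^{-3}(1 - φ(ξ)) dξ`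
finite. -/
theorem local_accumulation_time (n : ℝ) (hn : 1 < n)
    (φ : ℝ → ℝ) (hreg : ContDiffOn ℝ 1 φ (Set.Ioi 0))
    (hrange : ∀ ξ > (0:ℝ), 0 < φ ξ ∧ φ ξ < 1)
    (hmono : StrictAntiOn φ (Set.Ioi 0))
    (hlim0 : Tendsto φ (nhdsWithin 0 (Set.Ioi 0)) (nhds 1))
    (hliminf : Tendsto φ atTop (nhds 0))
    (C : ℝ) (hC : 0 < C)
    (hbound : ∀ ξ : ℝ, 0 < ξ → ξ ≤ 1 →
      1 - φ ξ ≤ C * ξ ^ (2 * (n + 1) / (n - 1)))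
    (hdecay : Tendsto (fun ξ => ξ ^ 2 * φ ξ) atTop (nhds 0)) :
    IntegrableOn (fun ξ => (1 - φ ξ) / ξ ^ 3) (Set.Ioi 0) ∧
    ∀ x > (0:ℝ),
      ∫ t in Set.Ioi (0:ℝ), t * deriv (fun s => φ (x / Real.sqrt s)) t =
        (2 * ∫ ξ in Set.Ioi (0:ℝ), (1 - φ ξ) / ξ ^ 3) * x ^ 2 := by
  have hn1 : (0:ℝ) < n - 1 := by linarith
  set p : ℝ := 2 * (n + 1) / (n - 1) with hp_def
  have hp2 : 2 < p := by
    rw [hp_def, lt_div_iff₀ hn1]; nlinarith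
  set A : ℝ → ℝ := fun ξ => (1 - φ ξ) / ξ ^ 3 with hA_def
  set Q : ℝ → ℝ := fun η => -deriv φ η / η ^ 2 with hQ_def
  set Hf : ℝ → ℝ := fun η => (1 - φ η) / η ^ 2 with hHf_def
  -- basic facts about φ
  have hφcont : ContinuousOn φ (Set.Ioi 0) := hreg.continuousOn
  have hφ'cont : ContinuousOn (deriv φ) (Set.Ioi 0) :=
    hreg.continuousOn_deriv_of_isOpen isOpen_Ioi le_rfl
  have hφdiff : ∀ η ∈ Set.Ioi (0:ℝ), HasDerivAt φ (deriv φ η) η := fun η hη =>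
    ((hreg.differentiableOn one_ne_zero).differentiableAt (isOpen_Ioi.mem_nhds hη)).hasDerivAt
  have hφ'le : ∀ η ∈ Set.Ioi (0:ℝ), deriv φ η ≤ 0 := aux_deriv_nonpos φ hmono hφdiff
  have h01 : ∀ η ∈ Set.Ioi (0:ℝ), 0 ≤ 1 - φ η := fun η hη => by
    linarith [(hrange η hη).2]
  have h01' : ∀ η ∈ Set.Ioi (0:ℝ), 1 - φ η ≤ 1 := fun η hη => by
    linarith [(hrange η hη).1]
  -- continuity of A, Q, Hf on Ioi 0
  have hAcont : ContinuousOn A (Set.Ioi 0) := by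
    exact (continuousOn_const.sub hφcont).div (continuous_pow 3).continuousOn
      (fun ξ hξ => pow_ne_zero 3 (ne_of_gt (mem_Ioi.mp hξ)))
  have hQcont : ContinuousOn Q (Set.Ioi 0) := by
    exact hφ'cont.neg.div (continuous_pow 2).continuousOn
      (fun ξ hξ => pow_ne_zero 2 (ne_of_gt (mem_Ioi.mp hξ)))
  have hAnn : ∀ ξ ∈ Set.Ioi (0:ℝ), 0 ≤ A ξ := fun ξ hξ =>
    div_nonneg (h01 ξ hξ) (pow_nonneg (le_of_lt (mem_Ioi.mp hξ)) 3)
  have hQnn : ∀ ξ ∈ Set.Ioi (0:ℝ), 0 ≤ Q ξ := fun ξ hξ =>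
    div_nonneg (neg_nonneg.mpr (hφ'le ξ hξ)) (pow_nonneg (le_of_lt (mem_Ioi.mp hξ)) 2)
  have hHnn : ∀ ξ ∈ Set.Ioi (0:ℝ), 0 ≤ Hf ξ := fun ξ hξ =>
    div_nonneg (h01 ξ hξ) (pow_nonneg (le_of_lt (mem_Ioi.mp hξ)) 2)
  -- Integrability of A
  have hA1 : IntegrableOn A (Set.Ioc 0 1) := by
    have hint : IntegrableOn (fun ξ : ℝ => C * ξ ^ (p - 3)) (Set.Ioc 0 1) := by
      have h1 := intervalIntegral.intervalIntegrable_rpow' (a := 0) (b := 1)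
        (by linarith : (-1:ℝ) < p - 3)
      rw [intervalIntegrable_iff_integrableOn_Ioc_of_le zero_le_one] at h1
      exact h1.const_mul C
    refine hint.mono' ((hAcont.mono Set.Ioc_subset_Ioi_self).aestronglyMeasurable
      measurableSet_Ioc) ?_
    filter_upwards [ae_restrict_mem measurableSet_Ioc] with ξ hξ
    have hξ0 : (0:ℝ) < ξ := hξ.1
    rw [Real.norm_of_nonneg (hAnn ξ hξ0)]
    have hb := hbound ξ hξ0 hξ.2
    have h3 : ξ ^ p / ξ ^ (3:ℕ) = ξ ^ (p - 3) := by
      rw [← Real.rpow_natCast ξ 3, ← Real.rpow_sub hξ0]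
      norm_num
    calc A ξ = (1 - φ ξ) / ξ ^ 3 := rfl
      _ ≤ C * ξ ^ p / ξ ^ 3 := by gcongr
      _ = C * ξ ^ (p - 3) := by rw [mul_div_assoc, h3]
  have hA2 : IntegrableOn A (Set.Ioi 1) := by
    refine (integrableOn_Ioi_rpow_of_lt (by norm_num : (-3:ℝ) < -1) one_pos).mono'
      ((hAcont.mono (Set.Ioi_subset_Ioi zero_le_one)).aestronglyMeasurable measurableSet_Ioi) ?_
    filter_upwards [ae_restrict_mem measurableSet_Ioi] with ξ hξ
    have hξ1 : (1:ℝ) < ξ := hξ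
    have hξ0 : (0:ℝ) < ξ := lt_trans one_pos hξ1
    rw [Real.norm_of_nonneg (hAnn ξ hξ0)]
    have h3 : ξ ^ (-3:ℝ) = 1 / ξ ^ (3:ℕ) := by
      rw [Real.rpow_neg hξ0.le, ← Real.rpow_natCast ξ 3]
      norm_num
    rw [h3]
    show (1 - φ ξ) / ξ ^ 3 ≤ 1 / ξ ^ 3
    gcongr
    exact h01' ξ hξ0
  have hAint : IntegrableOn A (Set.Ioi 0) := by
    rw [← Set.Ioc_union_Ioi_eq_Ioi (zero_le_one (α := ℝ))]
    exact hA1.union hA2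
  -- derivative of Hf
  have hHderiv : ∀ η ∈ Set.Ioi (0:ℝ), HasDerivAt Hf (Q η - 2 * A η) η := by
    intro η hη
    have hη0 : (0:ℝ) < η := hη
    have h1 : HasDerivAt (fun y => 1 - φ y) (-deriv φ η) η := by
      exact (hφdiff η hη).const_sub 1
    have h2 : HasDerivAt (fun y : ℝ => y ^ 2) (2 * η) η := by
      simpa using hasDerivAt_pow 2 η
    have h3 : HasDerivAt (fun y => (1 - φ y) / y ^ 2)
        ((-deriv φ η * η ^ 2 - (1 - φ η) * (2 * η)) / (η ^ 2) ^ 2) η :=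
      h1.div h2 (ne_of_gt (pow_pos hη0 2))
    convert h3 using 1
    simp only [hQ_def, hA_def]
    field_simp
  -- the fundamental theorem of calculus on compact subintervals
  have hkey : ∀ a b : ℝ, 0 < a → a ≤ b →
      ∫ ξ in Set.Ioc a b, Q ξ = Hf b - Hf a + 2 * ∫ ξ in Set.Ioc a b, A ξ := by
    intro a b ha hab
    have hsub : Set.uIcc a b ⊆ Set.Ioi 0 := by
      rw [Set.uIcc_of_le hab]
      exact fun y hy => lt_of_lt_of_le ha hy.1
    have hQi : IntervalIntegrable Q volume a b := (hQcont.mono hsub).intervalIntegrable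
    have hAi : IntervalIntegrable A volume a b := (hAcont.mono hsub).intervalIntegrable
    have hQAi : IntervalIntegrable (fun ξ => Q ξ - 2 * A ξ) volume a b := by
      simpa using hQi.sub (hAi.const_mul 2)
    have hftc : ∫ ξ in a..b, (Q ξ - 2 * A ξ) = Hf b - Hf a := by
      refine intervalIntegral.integral_eq_sub_of_hasDerivAt (fun y hy => ?_) hQAi
      exact hHderiv y (hsub hy)
    have hsplit : ∫ ξ in a..b, (Q ξ - 2 * A ξ) =
        (∫ ξ in a..b, Q ξ) - 2 * ∫ ξ in a..b, A ξ := by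
      rw [intervalIntegral.integral_sub hQi (hAi.const_mul 2),
        intervalIntegral.integral_const_mul]
    rw [← intervalIntegral.integral_of_le hab, ← intervalIntegral.integral_of_le hab]
    have := hftc.symm.trans hsplit
    linarith
  -- limits of Hf
  have hHtop : Tendsto Hf atTop (nhds 0) := by
    refine tendsto_of_tendsto_of_tendsto_of_le_of_le' tendsto_const_nhds
      ((tendsto_pow_atTop (n := 2) (by norm_num)).inv_tendsto_atTop (𝕜 := ℝ)) ?_ ?_
    · filter_upwards [eventually_gt_atTop (0:ℝ)] with η hη
      exact hHnn η hη
    · filter_upwards [eventually_gt_atTop (0:ℝ)] with η hη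
      show (1 - φ η) / η ^ 2 ≤ (η ^ 2)⁻¹
      rw [← one_div]
      gcongr
      exact h01' η hη
  have hH0 : Tendsto Hf (nhdsWithin 0 (Set.Ioi 0)) (nhds 0) := by
    have hup : Tendsto (fun η : ℝ => C * η ^ (p - 2)) (nhdsWithin 0 (Set.Ioi 0)) (nhds 0) := by
      have h1 : Tendsto (fun η : ℝ => η ^ (p - 2)) (nhds 0) (nhds ((0:ℝ) ^ (p - 2))) :=
        (Real.continuousAt_rpow_const 0 (p - 2) (Or.inr (by linarith))).tendsto
      rw [Real.zero_rpow (by linarith : p - 2 ≠ 0)] at h1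
      have h2 : Tendsto (fun η : ℝ => η ^ (p - 2)) (nhdsWithin 0 (Set.Ioi 0)) (nhds 0) :=
        h1.mono_left (nhdsWithin_le_nhds (s := Set.Ioi 0))
      simpa using h2.const_mul C
    refine tendsto_of_tendsto_of_tendsto_of_le_of_le' tendsto_const_nhds hup ?_ ?_
    · filter_upwards [self_mem_nhdsWithin] with η hη
      exact hHnn η hη
    · filter_upwards [Ioc_mem_nhdsGT_of_mem (by norm_num : (0:ℝ) ∈ Set.Ico (0:ℝ) 1)] with η hη
      show (1 - φ η) / η ^ 2 ≤ C * η ^ (p - 2)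
      have hη0 : (0:ℝ) < η := hη.1
      have h3 : η ^ p / η ^ (2:ℕ) = η ^ (p - 2) := by
        rw [← Real.rpow_natCast η 2, ← Real.rpow_sub hη0]
        norm_num
      calc (1 - φ η) / η ^ 2 ≤ C * η ^ p / η ^ 2 := by
            gcongr; exact hbound η hη0 hη.2
        _ = C * η ^ (p - 2) := by rw [mul_div_assoc, h3]
  -- local integrability of Q
  have hQloc : ∀ c b : ℝ, 0 < c → IntegrableOn Q (Set.Ioc c b) := by
    intro c b hc
    rcases le_or_gt c b with hcb | hcb
    · have hsub : Set.Icc c b ⊆ Set.Ioi 0 := fun y hy => lt_of_lt_of_le hc hy.1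
      exact ((hQcont.mono hsub).integrableOn_compact isCompact_Icc).mono_set
        Set.Ioc_subset_Icc_self
    · rw [Set.Ioc_eq_empty (not_lt.mpr hcb.le)]
      exact integrableOn_empty
  have hQnorm : ∀ c b : ℝ, 0 < c → (∫ ξ in Set.Ioc c b, ‖Q ξ‖) = ∫ ξ in Set.Ioc c b, Q ξ := by
    intro c b hc
    refine setIntegral_congr_fun measurableSet_Ioc fun ξ hξ => ?_
    exact Real.norm_of_nonneg (hQnn ξ (lt_trans hc hξ.1))
  have hQ1 : IntegrableOn Q (Set.Ioc 0 1) := by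
    refine integrableOn_Ioc_of_intervalIntegral_norm_bounded_left
      (I := Hf 1 + 2 * ∫ ξ in Set.Ioc 0 1, A ξ) (a := fun k : ℕ => 1/((k:ℝ)+1)) (b := 1)
      (fun k => hQloc _ _ (by positivity)) tendsto_one_div_add_atTop_nhds_zero_nat ?_
    refine Eventually.of_forall fun k => ?_
    have hc : (0:ℝ) < 1/((k:ℝ)+1) := by positivity
    have hc1 : 1/((k:ℝ)+1) ≤ 1 := by
      rw [div_le_one (by positivity)]
      simp
    rw [hQnorm _ _ hc, hkey _ _ hc hc1]
    have hAle : (∫ ξ in Set.Ioc (1/((k:ℝ)+1)) 1, A ξ) ≤ ∫ ξ in Set.Ioc 0 1, A ξ := by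
      refine setIntegral_mono_set hA1 ?_ (HasSubset.Subset.eventuallyLE
        (Set.Ioc_subset_Ioc_left hc.le))
      filter_upwards [ae_restrict_mem measurableSet_Ioc] with ξ hξ
      exact hAnn ξ hξ.1
    have := hHnn (1/((k:ℝ)+1)) hc
    linarith
  have hQ2 : IntegrableOn Q (Set.Ioi 1) := by
    refine integrableOn_Ioi_of_intervalIntegral_norm_bounded
      (1 + 2 * ∫ ξ in Set.Ioi 1, A ξ) 1 (b := fun k : ℕ => (k:ℝ)+1)
      (fun k => hQloc _ _ one_pos) (tendsto_atTop_add_const_right _ 1 tendsto_natCast_atTop_atTop) ?_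
    refine Eventually.of_forall fun k => ?_
    have h1b : (1:ℝ) ≤ (k:ℝ)+1 := by linarith [(Nat.cast_nonneg k : (0:ℝ) ≤ k)]
    rw [intervalIntegral.integral_of_le h1b, hQnorm _ _ one_pos, hkey _ _ one_pos h1b]
    have hAle : (∫ ξ in Set.Ioc 1 ((k:ℝ)+1), A ξ) ≤ ∫ ξ in Set.Ioi 1, A ξ := by
      refine setIntegral_mono_set hA2 ?_ (HasSubset.Subset.eventuallyLE Set.Ioc_subset_Ioi_self)
      filter_upwards [ae_restrict_mem measurableSet_Ioi] with ξ hξ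
      exact hAnn ξ (mem_Ioi.mpr (lt_trans one_pos hξ))
    have hHb : Hf ((k:ℝ)+1) ≤ 1 := by
      have hb0 : (0:ℝ) < (k:ℝ)+1 := by positivity
      have h1 : (1:ℝ) ≤ ((k:ℝ)+1) ^ 2 := by nlinarith [(Nat.cast_nonneg k : (0:ℝ) ≤ k)]
      calc Hf ((k:ℝ)+1) = (1 - φ ((k:ℝ)+1)) / ((k:ℝ)+1) ^ 2 := rfl
        _ ≤ 1 / 1 := by
            apply div_le_div₀ (zero_le_one) (h01' _ hb0) one_pos h1
        _ = 1 := div_one 1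
    have := hHnn 1 (Set.mem_Ioi.mpr one_pos)
    linarith
  have hQint : IntegrableOn Q (Set.Ioi 0) := by
    rw [← Set.Ioc_union_Ioi_eq_Ioi (zero_le_one (α := ℝ))]
    exact hQ1.union hQ2
  -- the integral identity for Q
  have hQval : ∫ ξ in Set.Ioi 0, Q ξ = 2 * ∫ ξ in Set.Ioi 0, A ξ := by
    set s : ℕ → Set ℝ := fun k => Set.Ioc (1/((k:ℝ)+1)) ((k:ℝ)+1) with hs_def
    have hsm : ∀ k, MeasurableSet (s k) := fun k => measurableSet_Ioc
    have hsmono : Monotone s := by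
      intro k l hkl
      apply Set.Ioc_subset_Ioc
      · apply one_div_le_one_div_of_le (by positivity)
        have : (k:ℝ) ≤ (l:ℝ) := Nat.cast_le.mpr hkl
        linarith
      · have : (k:ℝ) ≤ (l:ℝ) := Nat.cast_le.mpr hkl
        linarith
    have hsU : (⋃ k, s k) = Set.Ioi 0 := by
      ext y
      simp only [hs_def, Set.mem_iUnion, Set.mem_Ioc, Set.mem_Ioi]
      constructor
      · rintro ⟨k, hk1, -⟩
        exact lt_trans (by positivity) hk1
      · intro hy
        obtain ⟨k, hk⟩ := exists_nat_gt (max (1/y) y)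
        have hk1 : 1/y < (k:ℝ)+1 := lt_trans (lt_of_le_of_lt (le_max_left _ _) hk) (by linarith)
        have hk2 : y ≤ (k:ℝ)+1 := le_of_lt (lt_trans (lt_of_le_of_lt (le_max_right _ _) hk) (by linarith))
        refine ⟨k, ?_, hk2⟩
        rw [div_lt_iff₀ hy] at hk1
        rw [div_lt_iff₀ (by positivity)]
        linarith
    have htQ := tendsto_setIntegral_of_monotone hsm hsmono (by rw [hsU]; exact hQint)
    have htA := tendsto_setIntegral_of_monotone hsm hsmono (by rw [hsU]; exact hAint)
    rw [hsU] at htQ htA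
    have heq : ∀ k : ℕ, ∫ ξ in s k, Q ξ =
        Hf ((k:ℝ)+1) - Hf (1/((k:ℝ)+1)) + 2 * ∫ ξ in s k, A ξ := by
      intro k
      refine hkey _ _ (by positivity) ?_
      have h1 : 1/((k:ℝ)+1) ≤ 1 := by rw [div_le_one (by positivity)]; simp
      have h2 : (1:ℝ) ≤ (k:ℝ)+1 := by linarith [(Nat.cast_nonneg k : (0:ℝ) ≤ k)]
      linarith
    have hb1 : Tendsto (fun k : ℕ => Hf ((k:ℝ)+1)) atTop (nhds 0) :=
      hHtop.comp (tendsto_atTop_add_const_right _ 1 tendsto_natCast_atTop_atTop)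
    have ha1 : Tendsto (fun k : ℕ => Hf (1/((k:ℝ)+1))) atTop (nhds 0) := by
      refine hH0.comp (tendsto_nhdsWithin_of_tendsto_nhds_of_eventually_within _
        tendsto_one_div_add_atTop_nhds_zero_nat (Eventually.of_forall fun k => ?_))
      exact mem_Ioi.mpr (by positivity)
    have htQ2 : Tendsto (fun k => ∫ ξ in s k, Q ξ) atTop
        (nhds (0 - 0 + 2 * ∫ ξ in Set.Ioi 0, A ξ)) := by
      refine Tendsto.congr (fun k => (heq k).symm) ?_
      exact (hb1.sub ha1).add (htA.const_mul 2)
    have := tendsto_nhds_unique htQ htQ2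
    simpa using this
  refine ⟨hAint, fun x hx => ?_⟩
  -- derivative of the self-similar profile in t
  have hFderiv : ∀ t ∈ Set.Ioi (0:ℝ), HasDerivAt (fun s => φ (x / Real.sqrt s))
      (deriv φ (x / Real.sqrt t) *
        ((0 * Real.sqrt t - x * (1 / (2 * Real.sqrt t))) / Real.sqrt t ^ 2)) t := by
    intro t ht
    have ht0 : (0:ℝ) < t := ht
    have hst : (0:ℝ) < Real.sqrt t := Real.sqrt_pos.mpr ht0
    have hg : HasDerivAt (fun s => x / Real.sqrt s)
        ((0 * Real.sqrt t - x * (1 / (2 * Real.sqrt t))) / Real.sqrt t ^ 2) t :=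
      (hasDerivAt_const t x).div (Real.hasDerivAt_sqrt ht0.ne') hst.ne'
    have hin : x / Real.sqrt t ∈ Set.Ioi (0:ℝ) := div_pos hx hst
    exact (hφdiff _ hin).comp t hg
  -- pointwise identification after the substitution t = ξ⁻²
  have hpoint : ∀ ξ ∈ Set.Ioi (0:ℝ),
      (|(-2:ℝ)| * ξ ^ ((-2:ℝ) - 1)) *
        (ξ ^ (-2:ℝ) * deriv (fun s => φ (x / Real.sqrt s)) (ξ ^ (-2:ℝ)))
        = x ^ 3 * Q (x * ξ) := by
    intro ξ hξ
    have hξ0 : (0:ℝ) < ξ := hξ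
    have ht0 : (0:ℝ) < ξ ^ (-2:ℝ) := Real.rpow_pos_of_pos hξ0 _
    have hsq : Real.sqrt (ξ ^ (-2:ℝ)) = ξ⁻¹ := by
      rw [Real.sqrt_eq_rpow, ← Real.rpow_mul hξ0.le,
        show (-2:ℝ) * (1/2) = -1 by norm_num, Real.rpow_neg_one]
    have hderiv_t := (hFderiv _ ht0).deriv
    rw [hderiv_t, hsq]
    have hxdiv : x / ξ⁻¹ = x * ξ := by field_simp
    rw [hxdiv]
    have h2 : ξ ^ (-2:ℝ) = (ξ ^ 2)⁻¹ := by
      rw [Real.rpow_neg hξ0.le, show (2:ℝ) = ((2:ℕ):ℝ) by norm_num, Real.rpow_natCast]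
    have h3 : ξ ^ ((-2:ℝ) - 1) = (ξ ^ 3)⁻¹ := by
      rw [show (-2:ℝ) - 1 = -(3:ℝ) by norm_num, Real.rpow_neg hξ0.le,
        show (3:ℝ) = ((3:ℕ):ℝ) by norm_num, Real.rpow_natCast]
    rw [h2, h3, show |(-2:ℝ)| = 2 by norm_num, hQ_def]
    have hxξ : x * ξ ≠ 0 := (mul_pos hx hξ0).ne'
    field_simp
    ring
  -- change of variables t = ξ⁻²
  have hcomp : (∫ ξ in Set.Ioi (0:ℝ), (|(-2:ℝ)| * ξ ^ ((-2:ℝ) - 1)) *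
        (ξ ^ (-2:ℝ) * deriv (fun s => φ (x / Real.sqrt s)) (ξ ^ (-2:ℝ))))
      = ∫ t in Set.Ioi (0:ℝ), t * deriv (fun s => φ (x / Real.sqrt s)) t := by
    simpa only [smul_eq_mul] using
      integral_comp_rpow_Ioi (fun t => t * deriv (fun s => φ (x / Real.sqrt s)) t)
        (p := (-2:ℝ)) (by norm_num)
  rw [← hcomp, setIntegral_congr_fun measurableSet_Ioi hpoint]
  -- scaling η = x ξ
  have hscale : (∫ ξ in Set.Ioi (0:ℝ), x ^ 3 * Q (x * ξ))
      = x⁻¹ • ∫ η in Set.Ioi (0:ℝ), x ^ 3 * Q η := by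
    simpa using integral_comp_mul_left_Ioi (fun η => x ^ 3 * Q η) 0 hx
  rw [hscale, smul_eq_mul, MeasureTheory.integral_const_mul, hQval]
  field_simp
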